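/- Let F be a field, n a positive integer, R an F-subalgebra of U_n^*(F), and V a faithful right R-module that is finite dimensional over F with d = dim_F V. Then dim_F R ≤ M(d, d) = (1/2)(d² − d) + 1. -/

import Mathlib

set_option maxHeartbeats 2000000
set_option synthInstance.maxHeartbeats 400000

/-- The set of values `(n² − Σ kᵢ²)/2 + 1` over tuples of nonnegative
integers summing to `n`; `M(ℓ,n)` is its greatest element. -/
def MSet (ℓ n : ℕ) : Set ℤ :=
  {d | ∃ k : Fin ℓ → ℕ, (∑ i, k i) = n ∧
    2 * (d - 1) = (n : ℤ) ^ 2 - ∑ i, ((k i : ℤ)) ^ 2}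

/-- The set of upper triangular `n × n` matrices with constant main diagonal. -/
def UStarSet (F : Type*) [Field F] (n : ℕ) : Set (Matrix (Fin n) (Fin n) F) :=
  {A | (∀ i j : Fin n, j < i → A i j = 0) ∧ ∀ i j : Fin n, A i i = A j j}

lemma arith1 (dk mk : ℕ → ℕ) (N : ℕ) (h : ∀ k < N, dk k = mk k + dk (k+1)) :
    2 * (∑ k ∈ Finset.range N, mk k * dk (k+1)) + ∑ k ∈ Finset.range N, mk k ^ 2
      + dk N ^ 2 = dk 0 ^ 2 := by
  induction N with
  | zero => simp
  | succ N ih =>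
    have hN := h N (Nat.lt_succ_self N)
    have ih' := ih (fun k hk => h k (hk.trans (Nat.lt_succ_self N)))
    rw [Finset.sum_range_succ, Finset.sum_range_succ]
    zify at ih' ⊢
    have : (dk (N+1) : ℤ) = dk N - mk N := by
      have := hN; zify at this; linarith
    rw [this]
    linear_combination ih'

lemma arith2 (dk mk : ℕ → ℕ) (N : ℕ) (h : ∀ k < N, dk k = mk k + dk (k+1)) :
    ∑ k ∈ Finset.range N, mk k + dk N = dk 0 := by
  induction N with
  | zero => simp
  | succ N ih =>
    have hN := h N (Nat.lt_succ_self N)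
    have ih' := ih (fun k hk => h k (hk.trans (Nat.lt_succ_self N)))
    rw [Finset.sum_range_succ]
    omega

section MatrixLemmas
variable (F : Type*) [Field F] (n : ℕ)

/-- strictly upper triangular matrices -/
def Smat : Submodule F (Matrix (Fin n) (Fin n) F) where
  carrier := {A | ∀ i j : Fin n, (j : ℕ) ≤ i → A i j = 0}
  add_mem' := fun ha hb i j hij => by simp [ha i j hij, hb i j hij]
  zero_mem' := fun i j _ => rfl
  smul_mem' := fun c A ha i j hij => by simp [ha i j hij]

def Tmat (k : ℕ) : Submodule F (Matrix (Fin n) (Fin n) F) where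
  carrier := {A | ∀ i j : Fin n, (j : ℕ) < i + k → A i j = 0}
  add_mem' := fun ha hb i j hij => by simp [ha i j hij, hb i j hij]
  zero_mem' := fun i j _ => rfl
  smul_mem' := fun c A ha i j hij => by simp [ha i j hij]

lemma Smat_pow_le (k : ℕ) : (Smat F n) ^ k ≤ Tmat F n k := by
  induction k with
  | zero =>
    rw [pow_zero, Submodule.one_eq_span]
    refine Submodule.span_le.mpr ?_
    rintro A rfl
    intro i j hij
    have : i ≠ j := by
      intro h; subst h; omega
    exact Matrix.one_apply_ne this
  | succ k ih =>
    rw [pow_succ]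
    refine Submodule.mul_le.mpr fun a ha b hb => ?_
    have ha' := ih ha
    intro i j hij
    rw [Matrix.mul_apply]
    refine Finset.sum_eq_zero fun l _ => ?_
    rcases lt_or_ge (l : ℕ) ((i : ℕ) + k) with h | h
    · rw [ha' i l h, zero_mul]
    · rw [hb l j (by omega), mul_zero]

lemma Tmat_n : Tmat F n n = ⊥ := by
  refine le_bot_iff.mp fun A hA => ?_
  ext i j
  exact hA i j (by omega)

end MatrixLemmas


set_option maxHeartbeats 1000000
set_option synthInstance.maxHeartbeats 400000

section Aux
variable {F : Type*} [Field F] {n : ℕ}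
  {R : Subalgebra F (Matrix (Fin n) (Fin n) F)}
  {V : Type*} [AddCommGroup V] [Module F V] [Module (↥R)ᵐᵒᵖ V]

variable (hcompat : ∀ (c : F) (v : V),
      (MulOpposite.op (algebraMap F ↥R c)) • v = c • v)

open MulOpposite

include hcompat in
lemma smul_comm_key (c : F) (r : ↥R) (v : V) :
    op r • (c • v) = c • (op r • v) := by
  rw [← hcompat c v, ← mul_smul, ← op_mul, Algebra.commutes c r, op_mul, mul_smul,
    hcompat]

noncomputable def phi : ↥R →ₗ[F] Module.End F V where
  toFun r :=
    { toFun := fun v => op r • v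
      map_add' := fun v w => smul_add _ v w
      map_smul' := fun c v => smul_comm_key hcompat c r v }
  map_add' r s := LinearMap.ext fun v => by
    show op (r + s) • v = op r • v + op s • v
    rw [op_add, add_smul]
  map_smul' c r := LinearMap.ext fun v => by
    show op (c • r) • v = c • (op r • v)
    rw [Algebra.smul_def, op_mul, mul_smul, hcompat]
    exact smul_comm_key hcompat c r v

lemma phi_apply (r : ↥R) (v : V) : phi hcompat r v = op r • v := rfl

lemma phi_mul (x y : ↥R) :
    phi hcompat (y * x) = (phi hcompat x) ∘ₗ (phi hcompat y) := by
  refine LinearMap.ext fun v => ?_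
  show op (y * x) • v = op x • (op y • v)
  rw [op_mul, mul_smul]

lemma phi_one : phi hcompat (1 : ↥R) = LinearMap.id := by
  refine LinearMap.ext fun v => ?_
  show op (1 : ↥R) • v = v
  rw [op_one, one_smul]

/-- The chain of submodules `U k = span of images of products of k elements`. -/
noncomputable def Uchain (𝔑 : Submodule F ↥R) : ℕ → Submodule F V :=
  fun k => ⨆ y : ↥(𝔑 ^ k), LinearMap.range (phi hcompat (y : ↥R))

variable (𝔑 : Submodule F ↥R)

lemma Uchain_zero : Uchain hcompat 𝔑 0 = ⊤ := by
  refine top_le_iff.mp ?_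
  have h1 : (1 : ↥R) ∈ 𝔑 ^ 0 := by
    rw [pow_zero, Submodule.one_eq_span]
    exact Submodule.subset_span rfl
  have : LinearMap.range (phi hcompat ((⟨1, h1⟩ : ↥(𝔑 ^ 0)) : ↥R)) = ⊤ := by
    rw [phi_one]; exact LinearMap.range_id
  rw [← this]
  exact le_iSup (fun y : ↥(𝔑 ^ 0) => LinearMap.range (phi hcompat (y : ↥R))) ⟨1, h1⟩

lemma Uchain_bot (hpow : 𝔑 ^ n = ⊥) : Uchain hcompat 𝔑 n = ⊥ := by
  refine iSup_eq_bot.mpr fun y => ?_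
  have : (y : ↥R) = 0 := by
    have h2 : (y : ↥R) ∈ (⊥ : Submodule F ↥R) := by rw [← hpow]; exact y.2
    exact (Submodule.mem_bot F).mp h2
  rw [this, map_zero, LinearMap.range_zero]

lemma Uchain_step {x : ↥R} (hx : x ∈ 𝔑) (k : ℕ) :
    Submodule.map (phi hcompat x) (Uchain hcompat 𝔑 k) ≤ Uchain hcompat 𝔑 (k+1) := by
  rw [Uchain, Submodule.map_iSup]
  refine iSup_le fun y => ?_
  rw [← LinearMap.range_comp, ← phi_mul]
  have hmem : (y : ↥R) * x ∈ 𝔑 ^ (k+1) := by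
    rw [pow_succ]
    exact Submodule.mul_mem_mul y.2 hx
  exact le_iSup (fun z : ↥(𝔑 ^ (k+1)) => LinearMap.range (phi hcompat (z : ↥R)))
    ⟨(y : ↥R) * x, hmem⟩

lemma Uchain_anti (k : ℕ) :
    Uchain hcompat 𝔑 (k+1) ≤ Uchain hcompat 𝔑 k := by
  refine iSup_le fun y => ?_
  rintro _ ⟨v, rfl⟩
  have hy : (y : ↥R) ∈ 𝔑 * 𝔑 ^ k := by rw [← pow_succ']; exact y.2
  revert v
  refine Submodule.mul_induction_on hy ?_ ?_
  · intro m hm p hp v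
    rw [phi_mul hcompat p m]
    exact le_iSup (fun z : ↥(𝔑 ^ k) => LinearMap.range (phi hcompat (z : ↥R))) ⟨p, hp⟩
      ⟨phi hcompat m v, rfl⟩
  · intro a b ha hb v
    rw [map_add]
    exact add_mem (ha v) (hb v)

/-- The submodule of flag-decreasing endomorphisms. -/
def Tsub : Submodule F (Module.End F V) where
  carrier := {f | ∀ k, ∀ v ∈ Uchain hcompat 𝔑 k, f v ∈ Uchain hcompat 𝔑 (k+1)}
  add_mem' := fun hf hg k v hv => by
    rw [LinearMap.add_apply]; exact add_mem (hf k v hv) (hg k v hv)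
  zero_mem' := fun k v hv => by
    rw [LinearMap.zero_apply]; exact zero_mem _
  smul_mem' := fun c f hf k v hv => by
    rw [LinearMap.smul_apply]; exact Submodule.smul_mem _ c (hf k v hv)

lemma phi_mem_Tsub {x : ↥R} (hx : x ∈ 𝔑) : phi hcompat x ∈ Tsub hcompat 𝔑 :=
  fun k v hv => Uchain_step hcompat 𝔑 hx k (Submodule.mem_map_of_mem hv)

end Aux

section Delta
variable {F : Type*} [Field F] {n : ℕ}
  {R : Subalgebra F (Matrix (Fin n) (Fin n) F)}

def delta (hn : 0 < n) : ↥R →ₗ[F] F where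
  toFun r := (r : Matrix (Fin n) (Fin n) F) ⟨0, hn⟩ ⟨0, hn⟩
  map_add' r s := rfl
  map_smul' c r := rfl

end Delta

theorem stmt10 (F : Type*) [Field F] (n : ℕ) (hn : 0 < n)
    (R : Subalgebra F (Matrix (Fin n) (Fin n) F))
    (hR : (R : Set (Matrix (Fin n) (Fin n) F)) ⊆ UStarSet F n)
    (V : Type*) [AddCommGroup V] [Module F V] [Module (↥R)ᵐᵒᵖ V]
    (hcompat : ∀ (c : F) (v : V),
      (MulOpposite.op (algebraMap F ↥R c)) • v = c • v)
    (hfaith : ∀ r : ↥R, (∀ v : V, MulOpposite.op r • v = 0) → r = 0)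
    [FiniteDimensional F V] (M : ℤ)
    (hM : IsGreatest (MSet (Module.finrank F V) (Module.finrank F V)) M) :
    (Module.finrank F ↥R : ℤ) ≤ M ∧
      2 * (M - 1) = (Module.finrank F V : ℤ) ^ 2 - (Module.finrank F V : ℤ) := by
  classical
  haveI hFDR : FiniteDimensional F ↥R := inferInstance
  set d := Module.finrank F V with hd
  set δ : ↥R →ₗ[F] F := delta hn with hδ
  set 𝔑 : Submodule F ↥R := LinearMap.ker δ with h𝔑
  -- elements of 𝔑 are strictly upper triangular
  have hstrict : ∀ x : ↥R, x ∈ 𝔑 → (x : Matrix (Fin n) (Fin n) F) ∈ Smat F n := by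
    intro x hx i j hij
    rcases hij.lt_or_eq with h | h
    · exact (hR x.2).1 i j h
    · have hji : j = i := Fin.ext h
      subst hji
      have h2 : (x : Matrix (Fin n) (Fin n) F) j j
          = (x : Matrix (Fin n) (Fin n) F) ⟨0, hn⟩ ⟨0, hn⟩ := (hR x.2).2 j ⟨0, hn⟩
      rw [h2]
      exact LinearMap.mem_ker.mp hx
  -- 𝔑 is nilpotent
  have hpow : 𝔑 ^ n = ⊥ := by
    have hmapN : Submodule.map R.val.toLinearMap 𝔑 ≤ Smat F n := by
      rintro _ ⟨x, hx, rfl⟩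
      exact hstrict x hx
    have hle : ∀ k, Submodule.map R.val.toLinearMap (𝔑 ^ k) ≤ (Smat F n) ^ k := by
      intro k
      rw [Submodule.map_pow]
      induction k with
      | zero => simp
      | succ k ih =>
        rw [pow_succ, pow_succ]
        exact mul_le_mul' ih hmapN
    refine (Submodule.eq_bot_iff _).mpr fun x hx => ?_
    have h3 : (x : Matrix (Fin n) (Fin n) F) ∈ (Smat F n) ^ n :=
      hle n (Submodule.mem_map_of_mem hx)
    have h4 : (x : Matrix (Fin n) (Fin n) F) ∈ Tmat F n n := Smat_pow_le F n n h3
    rw [Tmat_n, Submodule.mem_bot] at h4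
    exact Subtype.ext h4
  -- rank-nullity for δ
  have hrank : Module.finrank F ↥R = Module.finrank F ↥𝔑 + 1 := by
    have hsurj : Function.Surjective δ := by
      intro c
      refine ⟨c • 1, ?_⟩
      have h1 : δ (1 : ↥R) = 1 := by
        show ((1 : ↥R) : Matrix (Fin n) (Fin n) F) ⟨0, hn⟩ ⟨0, hn⟩ = 1
        rw [OneMemClass.coe_one, Matrix.one_apply_eq]
      rw [map_smul, h1, smul_eq_mul, mul_one]
    have h2 := LinearMap.finrank_range_add_finrank_ker δ
    rw [LinearMap.range_eq_top.mpr hsurj, finrank_top, Module.finrank_self, ← h𝔑] at h2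
    omega
  -- injectivity of phi
  have hφinj : Function.Injective (phi hcompat : ↥R →ₗ[F] Module.End F V) := by
    intro a b hab
    have h3 : phi hcompat (a - b) = 0 := by rw [map_sub, hab, sub_self]
    have h4 : (a - b : ↥R) = 0 := by
      refine hfaith _ fun v => ?_
      have := LinearMap.congr_fun h3 v
      rwa [phi_apply, LinearMap.zero_apply] at this
    exact sub_eq_zero.mp h4
  -- complements
  have hCc : ∀ k : ℕ, ∃ C : Submodule F V,
      (C ⊔ Uchain hcompat 𝔑 (k+1) = Uchain hcompat 𝔑 k) ∧
        C ⊓ Uchain hcompat 𝔑 (k+1) = ⊥ := by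
    intro k
    obtain ⟨W, hW⟩ := Submodule.exists_isCompl (Uchain hcompat 𝔑 (k+1))
    refine ⟨W ⊓ Uchain hcompat 𝔑 k, ?_, ?_⟩
    · rw [sup_comm, ← sup_inf_assoc_of_le W (Uchain_anti hcompat 𝔑 k),
        hW.codisjoint.eq_top, top_inf_eq]
    · refine le_bot_iff.mp ?_
      calc W ⊓ Uchain hcompat 𝔑 k ⊓ Uchain hcompat 𝔑 (k+1)
          ≤ W ⊓ Uchain hcompat 𝔑 (k+1) :=
            inf_le_inf_right _ inf_le_left
        _ = ⊥ := hW.symm.inf_eq_bot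
  choose Cc hCsup hCinf using hCc
  have hCle : ∀ k, Cc k ≤ Uchain hcompat 𝔑 k := fun k => (hCsup k) ▸ le_sup_left
  -- the injection Φ
  let Φ : ↥(Tsub hcompat 𝔑) →ₗ[F]
      ((k : Fin n) → (↥(Cc (k : ℕ)) →ₗ[F] ↥(Uchain hcompat 𝔑 ((k : ℕ)+1)))) :=
    { toFun := fun f => fun k => LinearMap.codRestrict (Uchain hcompat 𝔑 ((k : ℕ)+1))
        ((f : Module.End F V).domRestrict (Cc (k : ℕ)))
        (fun c => f.2 (k : ℕ) (c : V) (hCle _ c.2))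
      map_add' := fun f g => rfl
      map_smul' := fun c f => rfl }
  have hΦinj : Function.Injective Φ := by
    refine LinearMap.ker_eq_bot.mp ((Submodule.eq_bot_iff _).mpr fun f hf => ?_)
    have hf0 : Φ f = 0 := hf
    have htop : (⨆ k : Fin n, Cc (k : ℕ)) = ⊤ := by
      have key : ∀ m : ℕ, Uchain hcompat 𝔑 (n - m) ≤ ⨆ k : Fin n, Cc (k : ℕ) := by
        intro m
        induction m with
        | zero =>
          rw [Nat.sub_zero, Uchain_bot hcompat 𝔑 hpow]
          exact bot_le
        | succ m ih =>
          rcases le_or_gt n m with h | h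
          · have he : n - (m+1) = n - m := by omega
            rw [he]; exact ih
          · have hj : n - (m+1) < n := by omega
            have hj1 : n - (m+1) + 1 = n - m := by omega
            rw [← hCsup (n - (m+1))]
            refine sup_le (le_iSup (fun k : Fin n => Cc (k : ℕ)) ⟨n - (m+1), hj⟩) ?_
            rw [hj1]; exact ih
      have h6 := key n
      rw [Nat.sub_self, Uchain_zero] at h6
      exact top_unique h6
    have hzero : ∀ (k : Fin n) (c : ↥(Cc (k : ℕ))), (f : Module.End F V) (c : V) = 0 := by
      intro k c
      have h1 : Φ f k c = 0 := by rw [hf0]; rfl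
      exact congrArg Subtype.val h1
    refine Subtype.ext (LinearMap.ext fun v => ?_)
    have hv : v ∈ ⨆ k : Fin n, Cc (k : ℕ) := by rw [htop]; trivial
    show (f : Module.End F V) v = 0
    refine Submodule.iSup_induction (motive := fun w => (f : Module.End F V) w = 0)
      (fun k : Fin n => Cc (k : ℕ)) hv ?_ (map_zero _) ?_
    · intro k x hx
      exact hzero k ⟨x, hx⟩
    · intro x y hx hy
      rw [map_add, hx, hy, add_zero]
  -- counting
  have hψle : Module.finrank F ↥𝔑 ≤ Module.finrank F ↥(Tsub hcompat 𝔑) := by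
    have hψinj : Function.Injective
        (LinearMap.codRestrict (Tsub hcompat 𝔑) ((phi hcompat).comp 𝔑.subtype)
          (fun x => phi_mem_Tsub hcompat 𝔑 x.2)) := by
      intro a b hab
      have h7 : phi hcompat (a : ↥R) = phi hcompat (b : ↥R) := congrArg Subtype.val hab
      exact Subtype.ext (hφinj h7)
    exact LinearMap.finrank_le_finrank_of_injective hψinj
  have hcount : Module.finrank F ↥(Tsub hcompat 𝔑) ≤
      ∑ k ∈ Finset.range n,
        Module.finrank F ↥(Cc k) * Module.finrank F ↥(Uchain hcompat 𝔑 (k+1)) := by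
    have h1 := LinearMap.finrank_le_finrank_of_injective hΦinj
    rw [Module.finrank_pi_fintype] at h1
    calc Module.finrank F ↥(Tsub hcompat 𝔑)
        ≤ ∑ k : Fin n, Module.finrank F
            (↥(Cc (k : ℕ)) →ₗ[F] ↥(Uchain hcompat 𝔑 ((k : ℕ)+1))) := h1
      _ = ∑ k : Fin n, Module.finrank F ↥(Cc (k : ℕ)) *
            Module.finrank F ↥(Uchain hcompat 𝔑 ((k : ℕ)+1)) := by
          refine Finset.sum_congr rfl fun k _ => ?_
          exact Module.finrank_linearMap F F _ _
      _ = _ := Fin.sum_univ_eq_sum_range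
          (fun k => Module.finrank F ↥(Cc k) * Module.finrank F ↥(Uchain hcompat 𝔑 (k+1))) n
  -- arithmetic
  have hdk : ∀ k, Module.finrank F ↥(Uchain hcompat 𝔑 k)
      = Module.finrank F ↥(Cc k) + Module.finrank F ↥(Uchain hcompat 𝔑 (k+1)) := by
    intro k
    have h5 := Submodule.finrank_sup_add_finrank_inf_eq (Cc k) (Uchain hcompat 𝔑 (k+1))
    rw [hCsup k, hCinf k, finrank_bot, add_zero] at h5
    exact h5
  have key := arith1 (fun k => Module.finrank F ↥(Uchain hcompat 𝔑 k))
    (fun k => Module.finrank F ↥(Cc k)) n (fun k _ => hdk k)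
  have key2 := arith2 (fun k => Module.finrank F ↥(Uchain hcompat 𝔑 k))
    (fun k => Module.finrank F ↥(Cc k)) n (fun k _ => hdk k)
  have hdk0 : Module.finrank F ↥(Uchain hcompat 𝔑 0) = d := by
    rw [Uchain_zero]; exact finrank_top F V
  have hdkn : Module.finrank F ↥(Uchain hcompat 𝔑 n) = 0 := by
    rw [Uchain_bot hcompat 𝔑 hpow]; exact finrank_bot F V
  rw [hdk0, hdkn] at key
  rw [hdkn, hdk0] at key2
  have hsumsq : ∑ k ∈ Finset.range n, Module.finrank F ↥(Cc k)
      ≤ ∑ k ∈ Finset.range n, Module.finrank F ↥(Cc k) ^ 2 :=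
    Finset.sum_le_sum fun k _ => Nat.le_self_pow two_ne_zero _
  have main : 2 * Module.finrank F ↥𝔑 + d ≤ d ^ 2 := by
    have h8 : 2 * Module.finrank F ↥𝔑 ≤ 2 * ∑ k ∈ Finset.range n,
        Module.finrank F ↥(Cc k) * Module.finrank F ↥(Uchain hcompat 𝔑 (k+1)) := by
      omega
    linarith
  -- part 2 : the value of M
  obtain ⟨kk, hksum, hkval⟩ := hM.1
  have hk2 : (d : ℤ) ≤ ∑ i, (kk i : ℤ) ^ 2 := by
    have h6 : ∀ i ∈ Finset.univ, (kk i : ℤ) ≤ (kk i : ℤ) ^ 2 := fun i _ => by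
      exact_mod_cast Nat.le_self_pow two_ne_zero (kk i)
    calc (d : ℤ) = ∑ i, (kk i : ℤ) := by exact_mod_cast hksum.symm
      _ ≤ _ := Finset.sum_le_sum h6
  have hMle : 2 * (M - 1) ≤ (d : ℤ) ^ 2 - d := by rw [hkval]; linarith
  obtain ⟨c, hc⟩ : ∃ c : ℤ, (d : ℤ) ^ 2 - d = c + c := by
    obtain ⟨c, hc⟩ := Int.even_mul_succ_self ((d : ℤ) - 1)
    refine ⟨c, ?_⟩
    have h9 : ((d : ℤ) - 1) * ((d : ℤ) - 1 + 1) = (d : ℤ) ^ 2 - d := by ring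
    linarith [hc, h9]
  have hmem : (c + 1 : ℤ) ∈ MSet d d := by
    refine ⟨fun _ => 1, by simp, ?_⟩
    simp only [Nat.cast_one, one_pow, Finset.sum_const, Finset.card_univ,
      Fintype.card_fin, nsmul_eq_mul, smul_eq_mul, mul_one]
    linarith
  have hMge : (c + 1 : ℤ) ≤ M := hM.2 hmem
  have hMval : 2 * (M - 1) = (d : ℤ) ^ 2 - d := by linarith
  refine ⟨?_, hMval⟩
  have hcast : ((2 * Module.finrank F ↥𝔑 + d : ℕ) : ℤ) ≤ ((d ^ 2 : ℕ) : ℤ) :=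
    Int.ofNat_le.mpr main
  push_cast at hcast
  have hrk : (Module.finrank F ↥R : ℤ) = (Module.finrank F ↥𝔑 : ℤ) + 1 := by
    exact_mod_cast hrank
  linarith
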